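/- Let x_j = (1, j, ..., j^p)' for j = −m, ..., m be the local polynomial design of degree p, Σ_d the covariance matrix of the process (1−L)^d ξ_t over the window, and K_d = diag(κ_d) with κ_d = Σ_d^{-1} 𝟙. If p ≤ d, then the weighted least squares estimator (X'K_dX)^{-1}X'K_d y equals the GLS estimator (X'Σ_d^{-1}X)^{-1}X'Σ_d^{-1} y for all y. -/

import Mathlib

open Matrix

/-- Autocovariance at lag `k` of the non-invertible MA(d) process `(1-L)^d ξ_t` with
unit-variance white noise. -/
noncomputable def maACV (d k : ℕ) : ℝ :=
  if k ≤ d then (-1 : ℝ) ^ k * ((2 * d).choose (d + k) : ℝ) else 0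

namespace KGLS

open Polynomial Finset

/-! ### Polynomial finite differences -/

/-- Forward difference of a polynomial. -/
noncomputable def pdiff (P : ℝ[X]) : ℝ[X] := Polynomial.taylor 1 P - P

lemma eval_pdiff (P : ℝ[X]) (x : ℝ) : (pdiff P).eval x = P.eval (x + 1) - P.eval x := by
  simp [pdiff, Polynomial.taylor_apply, Polynomial.eval_comp, add_comm]

lemma eval_pdiff_iter (K : ℕ) (P : ℝ[X]) (x : ℝ) :
    (pdiff^[K] P).eval x = (fwdDiff (1:ℝ))^[K] (fun t => P.eval t) x := by
  induction K generalizing P x with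
  | zero => simp
  | succ K ih =>
    rw [Function.iterate_succ_apply, Function.iterate_succ_apply, ih]
    have hfun : (fun t => Polynomial.eval t (pdiff P)) = fwdDiff (1:ℝ) (fun t => Polynomial.eval t P) := by
      funext t
      rw [eval_pdiff]
      rfl
    rw [hfun]

lemma coeff_pdiff_eq_zero {P : ℝ[X]} {l : ℕ} (h : P.natDegree ≤ l) : (pdiff P).coeff l = 0 := by
  have h1 : Polynomial.hasseDeriv l P = Polynomial.C (P.coeff l) := by
    ext j
    rw [Polynomial.hasseDeriv_coeff, Polynomial.coeff_C]
    rcases Nat.eq_zero_or_pos j with hj | hj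
    · subst hj; simp
    · rw [if_neg (by omega)]
      have : P.coeff (j + l) = 0 :=
        Polynomial.coeff_eq_zero_of_natDegree_lt (by omega)
      simp [this]
  simp [pdiff, Polynomial.taylor_coeff, h1]

lemma natDegree_pdiff (P : ℝ[X]) : (pdiff P).natDegree ≤ P.natDegree - 1 := by
  rw [Polynomial.natDegree_le_iff_coeff_eq_zero]
  intro N hN
  exact coeff_pdiff_eq_zero (by omega)

lemma natDegree_pdiff_iter (K : ℕ) (P : ℝ[X]) :
    (pdiff^[K] P).natDegree ≤ P.natDegree - K := by
  induction K generalizing P with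
  | zero => simp
  | succ K ih =>
    rw [Function.iterate_succ_apply]
    calc (pdiff^[K] (pdiff P)).natDegree ≤ (pdiff P).natDegree - K := ih _
      _ ≤ P.natDegree - (K + 1) := by
          have := natDegree_pdiff P; omega

/-! ### The polynomial `A` with roots at the out-of-window nodes -/

/-- `A(x) = ∏_{r<d} (x² - (m+r+1)²)`. -/
noncomputable def Apoly (m d : ℕ) : ℝ[X] :=
  ∏ r ∈ Finset.range d, (Polynomial.X ^ 2 - Polynomial.C (((m + r + 1 : ℕ) : ℝ) ^ 2))

lemma monic_Apoly (m d : ℕ) : (Apoly m d).Monic :=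
  Polynomial.monic_prod_of_monic _ _ fun r _ =>
    Polynomial.monic_X_pow_sub_C _ (by norm_num)

lemma natDegree_Apoly (m d : ℕ) : (Apoly m d).natDegree = 2 * d := by
  rw [Apoly, Polynomial.natDegree_prod_of_monic _ _
    (fun r _ => Polynomial.monic_X_pow_sub_C _ (by norm_num))]
  have hdeg : ∀ r ∈ Finset.range d,
      (Polynomial.X ^ 2 - Polynomial.C (((m + r + 1 : ℕ) : ℝ) ^ 2)).natDegree = 2 :=
    fun r _ => Polynomial.natDegree_X_pow_sub_C
  rw [Finset.sum_congr rfl hdeg, Finset.sum_const, smul_eq_mul, Finset.card_range, mul_comm]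

lemma Apoly_eval_zero (m d : ℕ) (x : ℤ) (h1 : m < x.natAbs) (h2 : x.natAbs ≤ m + d) :
    (Apoly m d).eval (x : ℝ) = 0 := by
  have hd : x.natAbs - m - 1 < d := by omega
  rw [Apoly, Polynomial.eval_prod]
  apply Finset.prod_eq_zero (Finset.mem_range.mpr hd)
  have hval : (m + (x.natAbs - m - 1) + 1 : ℕ) = x.natAbs := by omega
  rw [Polynomial.eval_sub, Polynomial.eval_pow, Polynomial.eval_X, Polynomial.eval_C, hval]
  have : ((x.natAbs : ℝ)) ^ 2 = (x : ℝ) ^ 2 := by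
    rw [Nat.cast_natAbs]
    push_cast
    rw [sq_abs]
  rw [this, sub_self]

lemma Apoly_eval_ne_zero (m d : ℕ) (i : ℕ) (hi : i ≤ 2 * m) :
    (Apoly m d).eval ((i : ℝ) - m) ≠ 0 := by
  rw [Apoly, Polynomial.eval_prod]
  apply Finset.prod_ne_zero_iff.mpr
  intro r _
  rw [Polynomial.eval_sub, Polynomial.eval_pow, Polynomial.eval_X, Polynomial.eval_C]
  have hlt : ((i : ℝ) - m) ^ 2 < ((m + r + 1 : ℕ) : ℝ) ^ 2 := by
    apply sq_lt_sq'
    · push_cast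
      have : (0:ℝ) ≤ (i:ℝ) := by positivity
      nlinarith [Nat.cast_nonneg (α := ℝ) r]
    · push_cast
      have : (i : ℝ) ≤ 2 * m := by exact_mod_cast Nat.cast_le.mpr hi
      nlinarith [Nat.cast_nonneg (α := ℝ) r]
  intro hcon
  nlinarith

/-! ### Parity helper -/

lemma neg_one_pow_congr {a b : ℕ} (h : a % 2 = b % 2) : (-1 : ℝ) ^ a = (-1 : ℝ) ^ b := by
  conv_lhs => rw [← Nat.div_add_mod a 2]
  conv_rhs => rw [← Nat.div_add_mod b 2]
  rw [h, pow_add, pow_add, pow_mul, pow_mul, neg_one_sq, one_pow, one_pow]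

/-! ### The window sum identity -/

lemma window_sum (m d : ℕ) (P : ℝ[X])
    (hroot : ∀ x : ℤ, m < x.natAbs → x.natAbs ≤ m + d → P.eval (x : ℝ) = 0)
    (i : Fin (2 * m + 1)) :
    ∑ i' : Fin (2 * m + 1), maACV d (((i : ℕ) : ℤ) - ((i' : ℕ) : ℤ)).natAbs
        * P.eval (((i' : ℕ) : ℝ) - m)
      = ∑ s ∈ Finset.range (2 * d + 1),
          ((-1 : ℝ) ^ d * ((-1 : ℝ) ^ (2 * d - s) * ((2 * d).choose s : ℝ)))
            * P.eval (((i : ℕ) : ℝ) - m + s - d) := by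
  classical
  have hi2m : (i : ℕ) ≤ 2 * m := by omega
  rw [Fin.sum_univ_eq_sum_range
    (fun t => maACV d (((i : ℕ) : ℤ) - (t : ℤ)).natAbs * P.eval ((t : ℝ) - m))]
  have hLfilter :
      (∑ t ∈ Finset.range (2 * m + 1),
          maACV d (((i : ℕ) : ℤ) - (t : ℤ)).natAbs * P.eval ((t : ℝ) - m))
        = ∑ t ∈ (Finset.range (2 * m + 1)).filter
            (fun (t : ℕ) => (((i : ℕ) : ℤ) - (t : ℤ)).natAbs ≤ d),
            maACV d (((i : ℕ) : ℤ) - (t : ℤ)).natAbs * P.eval ((t : ℝ) - m) := by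
    refine (Finset.sum_filter_of_ne ?_).symm
    intro t _ hne
    by_contra hcon
    exact hne (by rw [maACV, if_neg hcon, zero_mul])
  have hRfilter :
      (∑ s ∈ Finset.range (2 * d + 1),
          ((-1 : ℝ) ^ d * ((-1 : ℝ) ^ (2 * d - s) * ((2 * d).choose s : ℝ)))
            * P.eval (((i : ℕ) : ℝ) - m + s - d))
        = ∑ s ∈ (Finset.range (2 * d + 1)).filter
            (fun (s : ℕ) => (0 : ℤ) ≤ ((i : ℕ) : ℤ) + s - d ∧ ((i : ℕ) : ℤ) + s - d < 2 * m + 1),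
            ((-1 : ℝ) ^ d * ((-1 : ℝ) ^ (2 * d - s) * ((2 * d).choose s : ℝ)))
              * P.eval (((i : ℕ) : ℝ) - m + s - d) := by
    refine (Finset.sum_filter_of_ne ?_).symm
    intro s hs hne
    rw [Finset.mem_range] at hs
    by_contra hcon
    apply hne
    have hz : P.eval (((i : ℕ) : ℝ) - m + s - d) = 0 := by
      have hcast : ((((i : ℕ) : ℤ) + s - d - m : ℤ) : ℝ) = ((i : ℕ) : ℝ) - m + s - d := by
        push_cast; ring
      rw [← hcast]
      apply hroot <;> omega
    rw [hz, mul_zero]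
  rw [hLfilter, hRfilter]
  refine Finset.sum_nbij' (i := fun t => t + d - (i : ℕ)) (j := fun s => (i : ℕ) + s - d)
    ?_ ?_ ?_ ?_ ?_
  · intro t ht
    simp only [Finset.mem_filter, Finset.mem_range] at ht
    simp only [Finset.mem_filter, Finset.mem_range]
    refine ⟨by omega, by omega, by omega⟩
  · intro s hs
    simp only [Finset.mem_filter, Finset.mem_range] at hs
    simp only [Finset.mem_filter, Finset.mem_range]
    omega
  · intro t ht
    simp only [Finset.mem_filter, Finset.mem_range] at ht
    omega
  · intro s hs
    simp only [Finset.mem_filter, Finset.mem_range] at hs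
    omega
  · intro t ht
    simp only [Finset.mem_filter, Finset.mem_range] at ht
    obtain ⟨htn, habs⟩ := ht
    have heval : P.eval ((t : ℝ) - m) = P.eval (((i : ℕ) : ℝ) - m + (t + d - (i : ℕ) : ℕ) - d) := by
      congr 1
      have : ((t + d - (i : ℕ) : ℕ) : ℝ) = (t : ℝ) + d - (i : ℕ) := by
        push_cast [Nat.cast_sub (by omega : (i : ℕ) ≤ t + d)]
        ring
      rw [this]; ring
    rw [heval]
    congr 1
    -- coefficient identity
    set a : ℕ := (((i : ℕ) : ℤ) - (t : ℤ)).natAbs with ha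
    set s : ℕ := t + d - (i : ℕ) with hs
    have hale : a ≤ d := habs
    have hs2d : s ≤ 2 * d := by omega
    rw [maACV, if_pos hale]
    have hchoose : (2 * d).choose (d + a) = (2 * d).choose s := by
      rcases le_or_gt t (i : ℕ) with hle | hlt
      · have has : a = (i : ℕ) - t := by omega
        have hsd : s = d - a := by omega
        have h1 : (2 * d).choose (2 * d - (d + a)) = (2 * d).choose (d + a) :=
          Nat.choose_symm (by omega)
        have h2 : 2 * d - (d + a) = s := by omega
        rw [← h1, h2]
      · have has : a = t - (i : ℕ) := by omega
        have hsd : s = d + a := by omega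
        rw [hsd]
    rw [hchoose]
    have hsign : (-1 : ℝ) ^ a = (-1 : ℝ) ^ d * (-1 : ℝ) ^ (2 * d - s) := by
      rw [← pow_add]
      apply neg_one_pow_congr
      rcases le_or_gt t (i : ℕ) with hle | hlt <;> omega
    rw [hsign]
    ring

/-! ### The polynomial `Φ_k` and the matrix `M` -/

noncomputable def Phi (m d k : ℕ) : ℝ[X] :=
  (pdiff^[2 * d] (Apoly m d * Polynomial.X ^ k)).comp (Polynomial.X - Polynomial.C (d : ℝ))

lemma natDegree_AXk (m d k : ℕ) : (Apoly m d * Polynomial.X ^ k).natDegree = 2 * d + k := by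
  rw [Polynomial.Monic.natDegree_mul (monic_Apoly m d) (Polynomial.monic_X_pow k),
    natDegree_Apoly, Polynomial.natDegree_X_pow]

lemma natDegree_Phi (m d k : ℕ) : (Phi m d k).natDegree ≤ k := by
  calc (Phi m d k).natDegree
      ≤ (pdiff^[2 * d] (Apoly m d * Polynomial.X ^ k)).natDegree
          * (Polynomial.X - Polynomial.C (d : ℝ)).natDegree := Polynomial.natDegree_comp_le
    _ ≤ k := by
        rw [Polynomial.natDegree_X_sub_C, mul_one]
        have := natDegree_pdiff_iter (2 * d) (Apoly m d * Polynomial.X ^ k)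
        rw [natDegree_AXk] at this
        omega

lemma eval_Phi (m d k : ℕ) (x : ℝ) :
    (Phi m d k).eval x = ∑ s ∈ Finset.range (2 * d + 1),
      ((-1 : ℝ) ^ (2 * d - s) * ((2 * d).choose s : ℝ))
        * (Apoly m d * Polynomial.X ^ k).eval (x + s - d) := by
  rw [Phi, Polynomial.eval_comp, Polynomial.eval_sub, Polynomial.eval_X, Polynomial.eval_C,
    eval_pdiff_iter, fwdDiff_iter_eq_sum_shift]
  apply Finset.sum_congr rfl
  intro s _
  have hsmul : (s : ℕ) • (1 : ℝ) = (s : ℝ) := by simp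
  rw [hsmul]
  have : ((-1 : ℤ) ^ (2 * d - s) * ((2 * d).choose s : ℤ)) •
      (Apoly m d * Polynomial.X ^ k).eval (x - d + s)
      = ((-1 : ℝ) ^ (2 * d - s) * ((2 * d).choose s : ℝ))
        * (Apoly m d * Polynomial.X ^ k).eval (x - d + s) := by
    rw [zsmul_eq_mul]
    push_cast
    ring
  rw [this]
  congr 2
  ring

noncomputable def Mmat (m p d : ℕ) : Matrix (Fin (p + 1)) (Fin (p + 1)) ℝ :=
  fun l k => (-1 : ℝ) ^ d * (Phi m d (k : ℕ)).coeff (l : ℕ)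

/-! ### Matrix-level objects -/

noncomputable def Xmat (m p : ℕ) : Matrix (Fin (2 * m + 1)) (Fin (p + 1)) ℝ :=
  fun i k => ((i.val : ℝ) - (m : ℝ)) ^ (k.val)

noncomputable def Sig (m d : ℕ) : Matrix (Fin (2 * m + 1)) (Fin (2 * m + 1)) ℝ :=
  fun i j => maACV d ((i.val : ℤ) - j.val).natAbs

noncomputable def kt (m d : ℕ) : Fin (2 * m + 1) → ℝ :=
  fun i => (Apoly m d).eval (((i : ℕ) : ℝ) - m)

lemma sig_symm (m d : ℕ) : (Sig m d)ᵀ = Sig m d := by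
  ext i j
  simp only [Matrix.transpose_apply, Sig]
  congr 1
  omega

/-- The fundamental identity `Σ (K̃ X) = X M`. -/
lemma sig_mul (m p d : ℕ) :
    Sig m d * (Matrix.diagonal (kt m d) * Xmat m p) = Xmat m p * Mmat m p d := by
  ext i k
  rw [Matrix.mul_apply, Matrix.mul_apply]
  have hL : ∀ i' : Fin (2 * m + 1),
      Sig m d i i' * (Matrix.diagonal (kt m d) * Xmat m p) i' k
        = maACV d (((i : ℕ) : ℤ) - ((i' : ℕ) : ℤ)).natAbs
            * (Apoly m d * Polynomial.X ^ (k : ℕ)).eval (((i' : ℕ) : ℝ) - m) := by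
    intro i'
    rw [Matrix.diagonal_mul, Polynomial.eval_mul, Polynomial.eval_pow, Polynomial.eval_X]
    simp only [Sig, kt, Xmat]
  have hroot : ∀ x : ℤ, m < x.natAbs → x.natAbs ≤ m + d →
      (Apoly m d * Polynomial.X ^ (k : ℕ)).eval ((x : ℤ) : ℝ) = 0 := by
    intro x h1 h2
    rw [Polynomial.eval_mul, Apoly_eval_zero m d x h1 h2, zero_mul]
  have hXM : ∑ l : Fin (p + 1), Xmat m p i l * Mmat m p d l k
      = (-1 : ℝ) ^ d * (Phi m d (k : ℕ)).eval (((i : ℕ) : ℝ) - m) := by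
    have hdeg : (Phi m d (k : ℕ)).natDegree < p + 1 :=
      lt_of_le_of_lt (natDegree_Phi m d (k : ℕ)) (by omega)
    simp only [Xmat, Mmat]
    rw [Fin.sum_univ_eq_sum_range
      (fun l => ((((i : ℕ)) : ℝ) - m) ^ l * ((-1 : ℝ) ^ d * (Phi m d (k : ℕ)).coeff l))]
    rw [Polynomial.eval_eq_sum_range' hdeg, Finset.mul_sum]
    apply Finset.sum_congr rfl
    intro l _
    ring
  calc ∑ i', Sig m d i i' * (Matrix.diagonal (kt m d) * Xmat m p) i' k
      = ∑ i' : Fin (2 * m + 1), maACV d (((i : ℕ) : ℤ) - ((i' : ℕ) : ℤ)).natAbs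
          * (Apoly m d * Polynomial.X ^ (k : ℕ)).eval (((i' : ℕ) : ℝ) - m) :=
        Finset.sum_congr rfl fun i' _ => hL i'
    _ = ∑ s ∈ Finset.range (2 * d + 1),
          ((-1 : ℝ) ^ d * ((-1 : ℝ) ^ (2 * d - s) * ((2 * d).choose s : ℝ)))
            * (Apoly m d * Polynomial.X ^ (k : ℕ)).eval (((i : ℕ) : ℝ) - m + s - d) :=
        window_sum m d _ hroot i
    _ = (-1 : ℝ) ^ d * (Phi m d (k : ℕ)).eval (((i : ℕ) : ℝ) - m) := by
        rw [eval_Phi, Finset.mul_sum]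
        apply Finset.sum_congr rfl
        intro s _
        ring
    _ = ∑ l : Fin (p + 1), Xmat m p i l * Mmat m p d l k := hXM.symm

lemma kt_ne_zero (m d : ℕ) (i : Fin (2 * m + 1)) : kt m d i ≠ 0 :=
  Apoly_eval_ne_zero m d (i : ℕ) (by omega)

/-- The master theorem. -/
theorem master (m p d : ℕ) (y : Fin (2 * m + 1) → ℝ) :
    ((Xmat m p)ᵀ * Matrix.diagonal ((Sig m d)⁻¹ *ᵥ (fun _ => 1)) * Xmat m p)⁻¹
        *ᵥ ((Xmat m p)ᵀ *ᵥ (Matrix.diagonal ((Sig m d)⁻¹ *ᵥ (fun _ => 1)) *ᵥ y))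
      = ((Xmat m p)ᵀ * (Sig m d)⁻¹ * Xmat m p)⁻¹ *ᵥ ((Xmat m p)ᵀ *ᵥ ((Sig m d)⁻¹ *ᵥ y)) := by
  classical
  set X := Xmat m p with hX
  set S := Sig m d with hS0
  set kap : Fin (2 * m + 1) → ℝ := S⁻¹ *ᵥ (fun _ => 1) with hkap
  set Kd := Matrix.diagonal kap with hKd
  by_cases hS : IsUnit S.det
  · by_cases hp : p ≤ 2 * m
    · -- main case
      have hXinj : ∀ v : Fin (p + 1) → ℝ, X *ᵥ v = 0 → v = 0 := by
        intro v hv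
        by_contra hv0
        set V : Matrix (Fin (p + 1)) (Fin (p + 1)) ℝ :=
          Matrix.vandermonde (fun l : Fin (p + 1) => ((l : ℕ) : ℝ) - m) with hV
        have hVdet : V.det ≠ 0 := by
          apply Matrix.det_vandermonde_ne_zero_iff.mpr
          intro a b hab
          have hcast : ((a : ℕ) : ℝ) = ((b : ℕ) : ℝ) := by
            have h1 : ((a : ℕ) : ℝ) - m = ((b : ℕ) : ℝ) - m := hab
            linarith
          exact Fin.ext (Nat.cast_injective hcast)
        apply hVdet
        apply Matrix.exists_mulVec_eq_zero_iff.mp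
        refine ⟨v, hv0, ?_⟩
        funext l
        have hVX : (V *ᵥ v) l = (X *ᵥ v) ⟨(l : ℕ), by omega⟩ := by
          simp only [Matrix.mulVec, dotProduct, hV, Matrix.vandermonde_apply, hX, Xmat]
        rw [hVX, hv]
        rfl
      -- the triangular matrix M
      set M := Mmat m p d with hMdef
      have hsig : S * (Matrix.diagonal (kt m d) * X) = X * M := sig_mul m p d
      have hM : IsUnit M.det := by
        rw [isUnit_iff_ne_zero]
        intro hdet0
        obtain ⟨v, hv0, hMv⟩ := Matrix.exists_mulVec_eq_zero_iff.mpr hdet0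
        have h1 : (X * M) *ᵥ v = 0 := by
          rw [← Matrix.mulVec_mulVec, hMv, Matrix.mulVec_zero]
        rw [← hsig] at h1
        have h2 : (Matrix.diagonal (kt m d) * X) *ᵥ v = 0 := by
          have h3 := congrArg (fun w => S⁻¹ *ᵥ w) h1
          simp only [Matrix.mulVec_zero] at h3
          rwa [Matrix.mulVec_mulVec, ← Matrix.mul_assoc, Matrix.nonsing_inv_mul _ hS,
            Matrix.one_mul] at h3
        have h4 : X *ᵥ v = 0 := by
          funext i
          have h5 := congrFun h2 i
          rw [← Matrix.mulVec_mulVec, Matrix.mulVec_diagonal] at h5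
          have h6 : (X *ᵥ v) i = 0 := by
            rcases mul_eq_zero.mp h5 with h | h
            · exact absurd h (kt_ne_zero m d i)
            · exact h
          simpa using h6
        exact hv0 (hXinj v h4)
      have hSM : S⁻¹ * X = Matrix.diagonal (kt m d) * X * M⁻¹ := by
        have h2 : S⁻¹ * (X * M) = Matrix.diagonal (kt m d) * X := by
          rw [← hsig, ← Matrix.mul_assoc, Matrix.nonsing_inv_mul _ hS, Matrix.one_mul]
        calc S⁻¹ * X = S⁻¹ * (X * M) * M⁻¹ := by
              rw [Matrix.mul_assoc (S⁻¹) (X * M) (M⁻¹), Matrix.mul_assoc X M (M⁻¹),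
                Matrix.mul_nonsing_inv _ hM, Matrix.mul_one]
          _ = Matrix.diagonal (kt m d) * X * M⁻¹ := by rw [h2]
      set e0 : Fin (p + 1) → ℝ := Pi.single 0 1 with he0
      have he1 : X *ᵥ e0 = fun _ => (1 : ℝ) := by
        rw [he0, Matrix.mulVec_single]
        funext i
        simp [hX, Xmat]
      have hMcol : ∀ l : Fin (p + 1), l ≠ 0 → M l 0 = 0 := by
        intro l hl
        have hlpos : 0 < (l : ℕ) := by
          rcases Nat.eq_zero_or_pos (l : ℕ) with h | h
          · exact absurd (Fin.ext h) hl
          · exact h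
        have hdeg : (Phi m d (((0 : Fin (p + 1))) : ℕ)).natDegree < (l : ℕ) :=
          lt_of_le_of_lt (natDegree_Phi m d _) (by simpa using hlpos)
        simp only [hMdef, Mmat]
        rw [Polynomial.coeff_eq_zero_of_natDegree_lt hdeg, mul_zero]
      have hMe : M *ᵥ e0 = M 0 0 • e0 := by
        rw [he0, Matrix.mulVec_single]
        funext l
        rcases eq_or_ne l 0 with rfl | hl
        · simp
        · simp only [Pi.smul_apply, Matrix.col_apply, op_smul_eq_mul, mul_one]
          rw [hMcol l hl]
          simp [Pi.single_apply, hl]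
      have hsingle_ne : e0 ≠ 0 := by
        intro hc
        have h7 := congrFun hc 0
        rw [he0] at h7
        simp at h7
      have hM00 : M 0 0 ≠ 0 := by
        intro h0
        have hz : M *ᵥ e0 = 0 := by rw [hMe, h0, zero_smul]
        have h8 : M.det = 0 := Matrix.exists_mulVec_eq_zero_iff.mp ⟨_, hsingle_ne, hz⟩
        rw [h8] at hM
        simp at hM
      have hBe : M⁻¹ *ᵥ e0 = (M 0 0)⁻¹ • e0 := by
        have h1 : M⁻¹ *ᵥ (M *ᵥ e0) = e0 := by
          rw [Matrix.mulVec_mulVec, Matrix.nonsing_inv_mul _ hM, Matrix.one_mulVec]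
        rw [hMe, Matrix.mulVec_smul] at h1
        have h2 : (M 0 0)⁻¹ • (M 0 0 • (M⁻¹ *ᵥ e0)) = (M 0 0)⁻¹ • e0 := by rw [h1]
        rwa [smul_smul, inv_mul_cancel₀ hM00, one_smul] at h2
      have hkapkt : kap = (M 0 0)⁻¹ • kt m d := by
        rw [hkap, ← he1, Matrix.mulVec_mulVec, hSM]
        rw [← Matrix.mulVec_mulVec, hBe, Matrix.mulVec_smul]
        congr 1
        rw [← Matrix.mulVec_mulVec, he1]
        funext i
        rw [Matrix.mulVec_diagonal]
        simp
      have hKkt : Matrix.diagonal (kt m d) = M 0 0 • Kd := by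
        rw [hKd, hkapkt, Matrix.diagonal_smul, smul_smul, mul_inv_cancel₀ hM00, one_smul]
      have hSX : S⁻¹ * X = Kd * X * (M 0 0 • M⁻¹) := by
        rw [hSM, hKkt, Matrix.smul_mul, Matrix.smul_mul, Matrix.mul_smul]
      set B' : Matrix (Fin (p + 1)) (Fin (p + 1)) ℝ := M 0 0 • M⁻¹ with hB'
      have hB'det : IsUnit B'.det := by
        rw [hB', Matrix.det_smul]
        exact (isUnit_iff_ne_zero.mpr (pow_ne_zero _ hM00)).mul
          (Matrix.isUnit_nonsing_inv_det _ hM)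
      have hSsymm : (S⁻¹)ᵀ = S⁻¹ := by
        rw [Matrix.transpose_nonsing_inv, hS0, sig_symm]
      have htrans : Xᵀ * S⁻¹ = B'ᵀ * (Xᵀ * Kd) := by
        calc Xᵀ * S⁻¹ = Xᵀ * (S⁻¹)ᵀ := by rw [hSsymm]
          _ = (S⁻¹ * X)ᵀ := (Matrix.transpose_mul _ _).symm
          _ = (Kd * X * B')ᵀ := by rw [hSX, hB']
          _ = B'ᵀ * (Kd * X)ᵀ := Matrix.transpose_mul _ _
          _ = B'ᵀ * (Xᵀ * Kdᵀ) := by rw [Matrix.transpose_mul]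
          _ = B'ᵀ * (Xᵀ * Kd) := by rw [hKd, Matrix.diagonal_transpose]
      have hG : Xᵀ * S⁻¹ * X = B'ᵀ * (Xᵀ * Kd * X) := by
        rw [htrans, Matrix.mul_assoc]
      have hy : Xᵀ *ᵥ (S⁻¹ *ᵥ y) = B'ᵀ *ᵥ ((Xᵀ * Kd) *ᵥ y) := by
        rw [Matrix.mulVec_mulVec, Matrix.mulVec_mulVec, htrans, ← Matrix.mulVec_mulVec]
      have hunit : (B'ᵀ)⁻¹ * B'ᵀ = 1 :=
        Matrix.nonsing_inv_mul _ (by rwa [Matrix.det_transpose])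
      rw [hG, Matrix.mul_inv_rev, hy]
      have hr : (B'ᵀ)⁻¹ *ᵥ (B'ᵀ *ᵥ ((Xᵀ * Kd) *ᵥ y)) = (Xᵀ * Kd) *ᵥ y := by
        rw [Matrix.mulVec_mulVec, hunit, Matrix.one_mulVec]
      calc (Xᵀ * Kd * X)⁻¹ *ᵥ (Xᵀ *ᵥ (Kd *ᵥ y))
          = (Xᵀ * Kd * X)⁻¹ *ᵥ ((Xᵀ * Kd) *ᵥ y) := by
            simp only [Matrix.mulVec_mulVec, Matrix.mul_assoc]
        _ = (Xᵀ * Kd * X)⁻¹ *ᵥ ((B'ᵀ)⁻¹ *ᵥ (B'ᵀ *ᵥ ((Xᵀ * Kd) *ᵥ y))) := by rw [hr]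
        _ = ((Xᵀ * Kd * X)⁻¹ * (B'ᵀ)⁻¹) *ᵥ (B'ᵀ *ᵥ ((Xᵀ * Kd) *ᵥ y)) :=
            Matrix.mulVec_mulVec _ _ _
    · -- too many columns: both Gram matrices singular
      obtain ⟨v, hv0, hXv⟩ : ∃ v : Fin (p + 1) → ℝ, v ≠ 0 ∧ X *ᵥ v = 0 := by
        set X' : Matrix (Fin (p + 1)) (Fin (p + 1)) ℝ :=
          fun i k => if h : (i : ℕ) < 2 * m + 1 then X ⟨(i : ℕ), h⟩ k else 0 with hX'
        have hdet : X'.det = 0 := by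
          apply Matrix.det_eq_zero_of_row_eq_zero (⟨2 * m + 1, by omega⟩ : Fin (p + 1))
          intro k
          exact dif_neg (by simp)
        obtain ⟨v, hv, h0⟩ := Matrix.exists_mulVec_eq_zero_iff.mpr hdet
        refine ⟨v, hv, ?_⟩
        funext i
        have hcomp : (X *ᵥ v) i = (X' *ᵥ v) ⟨(i : ℕ), by omega⟩ := by
          simp only [Matrix.mulVec, dotProduct, hX', hX, Xmat]
          apply Finset.sum_congr rfl
          intro k _
          congr 1
          beta_reduce
          rw [dif_pos]
          exact i.isLt
        rw [hcomp, h0]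
        rfl
      have hzero : ∀ W : Matrix (Fin (2 * m + 1)) (Fin (2 * m + 1)) ℝ,
          (Xᵀ * W * X)⁻¹ = 0 := by
        intro W
        apply Matrix.nonsing_inv_apply_not_isUnit
        have hdet0 : (Xᵀ * W * X).det = 0 := by
          apply Matrix.exists_mulVec_eq_zero_iff.mp
          refine ⟨v, hv0, ?_⟩
          rw [← Matrix.mulVec_mulVec, hXv, Matrix.mulVec_zero]
        rw [hdet0]
        simp
      rw [hzero, hzero]
      simp
  · -- S singular
    have hSinv : S⁻¹ = 0 := Matrix.nonsing_inv_apply_not_isUnit _ hS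
    have hkap0 : kap = 0 := by
      rw [hkap, hSinv, Matrix.zero_mulVec]
    rw [hSinv, hKd, hkap0]
    have hd0 : Matrix.diagonal (0 : Fin (2 * m + 1) → ℝ) = 0 := Matrix.diagonal_zero
    rw [hd0]

end KGLS

/-- Kernel–GLS equivalence (Luati–Proietti): for the local polynomial design of degree
`p ≤ d`, weighted least squares with the row-sum kernel `κ_d = Σ_d⁻¹ 𝟙` coincides with
GLS under the covariance `Σ_d` of the non-invertible MA(d) process. -/
theorem kernel_GLS_equivalence (m p d : ℕ) (hm : 1 ≤ m) (hpd : p ≤ d) :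
    let X : Matrix (Fin (2 * m + 1)) (Fin (p + 1)) ℝ :=
      fun i k => ((i.val : ℝ) - (m : ℝ)) ^ (k.val)
    let Sigd : Matrix (Fin (2 * m + 1)) (Fin (2 * m + 1)) ℝ :=
      fun i j => maACV d ((i.val : ℤ) - j.val).natAbs
    let kapd : Fin (2 * m + 1) → ℝ := Sigd⁻¹ *ᵥ (fun _ => 1)
    let Kd : Matrix (Fin (2 * m + 1)) (Fin (2 * m + 1)) ℝ := Matrix.diagonal kapd
    ∀ y : Fin (2 * m + 1) → ℝ,
      (Xᵀ * Kd * X)⁻¹ *ᵥ (Xᵀ *ᵥ (Kd *ᵥ y))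
        = (Xᵀ * Sigd⁻¹ * X)⁻¹ *ᵥ (Xᵀ *ᵥ (Sigd⁻¹ *ᵥ y)) := by
  intro X Sigd kapd Kd y
  exact KGLS.master m p d y
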